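/- arXiv:1410.5140 — 2 statements merged into one kernel-verified Lean document; each statement's English description precedes it below -/
import Mathlib

section
/- Let α ∈ [0, π/2) and let A be an n×n complex matrix with W(A) ⊆ S_α, partitioned into 2×2 blocks with A_{11} square. Then sec²(α) · (Re A)/(Re A_{11}) ≥ Re(A/A_{11}) in the Loewner order. -/
open Matrix ComplexOrder

/-- The numerical range (field of values) of a complex matrix. -/
def numericalRange {m : Type*} [Fintype m] (A : Matrix m m ℂ) : Set ℂ :=
  {z | ∃ x : m → ℂ, star x ⬝ᵥ x = 1 ∧ z = star x ⬝ᵥ A.mulVec x}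

/-- The sector `S_α` of half-angle `α` around the positive real axis. -/
def sector (α : ℝ) : Set ℂ :=
  {z | 0 < z.re ∧ |z.im| ≤ z.re * Real.tan α}

/-- The Schur complement `A/A₁₁ = A₂₂ - A₂₁ A₁₁⁻¹ A₁₂` of the (1,1) block. -/
noncomputable def schur {p q : ℕ} (A : Matrix (Fin p ⊕ Fin q) (Fin p ⊕ Fin q) ℂ) :
    Matrix (Fin q) (Fin q) ℂ :=
  A.toBlocks₂₂ - A.toBlocks₂₁ * (A.toBlocks₁₁)⁻¹ * A.toBlocks₁₂

/-- The Hermitian real part `(A + Aᴴ)/2` of a complex matrix. -/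
noncomputable def matRe {m : Type*} [Fintype m] (A : Matrix m m ℂ) : Matrix m m ℂ :=
  (1 / 2 : ℂ) • (A + Aᴴ)

section helpers
variable {m : Type*} [Fintype m]

lemma dot_conjT (M : Matrix m m ℂ) (u v : m → ℂ) :
    star u ⬝ᵥ Mᴴ *ᵥ v = star (star v ⬝ᵥ M *ᵥ u) := by
  rw [Matrix.mulVec_conjTranspose, Matrix.dotProduct_star, star_star, ← Matrix.dotProduct_mulVec]

lemma herm_dot {M : Matrix m m ℂ} (hM : Mᴴ = M) (u v : m → ℂ) :
    star v ⬝ᵥ M *ᵥ u = star (star u ⬝ᵥ M *ᵥ v) := by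
  conv_lhs => rw [← hM]
  rw [dot_conjT]

lemma qf_matRe (M : Matrix m m ℂ) (x : m → ℂ) :
    star x ⬝ᵥ (matRe M) *ᵥ x = ((star x ⬝ᵥ M *ᵥ x).re : ℂ) := by
  rw [matRe, Matrix.smul_mulVec, dotProduct_smul, Matrix.add_mulVec,
    dotProduct_add, dot_conjT]
  rw [Complex.star_def, Complex.add_conj]
  rw [smul_eq_mul]
  push_cast
  ring

lemma matRe_herm (M : Matrix m m ℂ) : (matRe M)ᴴ = matRe M := by
  simp [matRe, Matrix.conjTranspose_smul, Matrix.conjTranspose_add, add_comm]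

end helpers

section sect
variable {m : Type*} [Fintype m] {A : Matrix m m ℂ} {α : ℝ}

lemma sector_qf (hA : numericalRange A ⊆ sector α) {x : m → ℂ} (hx : x ≠ 0) :
    0 < (star x ⬝ᵥ A *ᵥ x).re ∧
      |(star x ⬝ᵥ A *ᵥ x).im| ≤ (star x ⬝ᵥ A *ᵥ x).re * Real.tan α := by
  classical
  have hdot : star x ⬝ᵥ x = ((∑ i, Complex.normSq (x i) : ℝ) : ℂ) := by
    simp [dotProduct, Complex.star_def, Complex.normSq_eq_conj_mul_self]
  set r : ℝ := ∑ i, Complex.normSq (x i) with hr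
  have hrpos : 0 < r := by
    obtain ⟨i, hi⟩ := Function.ne_iff.mp hx
    exact Finset.sum_pos' (fun j _ => Complex.normSq_nonneg _)
      ⟨i, Finset.mem_univ i, Complex.normSq_pos.mpr hi⟩
  set c : ℂ := (((Real.sqrt r)⁻¹ : ℝ) : ℂ) with hc
  have hcsq : c * c = (r : ℂ)⁻¹ := by
    rw [hc]
    push_cast
    rw [← mul_inv]
    norm_cast
    rw [Real.mul_self_sqrt hrpos.le]
  have hmem : (r : ℂ)⁻¹ * (star x ⬝ᵥ A *ᵥ x) ∈ sector α := by
    refine hA ⟨c • x, ?_, ?_⟩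
    · rw [star_smul, smul_dotProduct, dotProduct_smul, hdot, smul_smul, smul_eq_mul]
      have : star c = c := by rw [hc]; exact Complex.conj_ofReal _
      rw [this, hcsq]
      exact inv_mul_cancel₀ (by exact_mod_cast hrpos.ne')
    · rw [star_smul, smul_dotProduct, Matrix.mulVec_smul, dotProduct_smul,
        smul_smul, smul_eq_mul]
      have : star c = c := by rw [hc]; exact Complex.conj_ofReal _
      rw [this, hcsq]
  obtain ⟨h1, h2⟩ := hmem
  have hre : ((r : ℂ)⁻¹ * (star x ⬝ᵥ A *ᵥ x)).re = r⁻¹ * (star x ⬝ᵥ A *ᵥ x).re := by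
    simp [Complex.mul_re]
  have him : ((r : ℂ)⁻¹ * (star x ⬝ᵥ A *ᵥ x)).im = r⁻¹ * (star x ⬝ᵥ A *ᵥ x).im := by
    simp [Complex.mul_im]
  rw [hre] at h1
  rw [hre, him] at h2
  constructor
  · have := mul_pos hrpos h1
    rwa [← mul_assoc, mul_inv_cancel₀ hrpos.ne', one_mul] at this
  · have h3 : |r⁻¹ * (star x ⬝ᵥ A *ᵥ x).im| = r⁻¹ * |(star x ⬝ᵥ A *ᵥ x).im| := by
      rw [abs_mul, abs_of_nonneg (inv_nonneg.mpr hrpos.le)]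
    rw [h3] at h2
    have := mul_le_mul_of_nonneg_left h2 hrpos.le
    calc |(star x ⬝ᵥ A *ᵥ x).im| = r * (r⁻¹ * |(star x ⬝ᵥ A *ᵥ x).im|) := by
          field_simp
      _ ≤ r * (r⁻¹ * (star x ⬝ᵥ A *ᵥ x).re * Real.tan α) := this
      _ = (star x ⬝ᵥ A *ᵥ x).re * Real.tan α := by field_simp

lemma sector_qf' (hA : numericalRange A ⊆ sector α) (x : m → ℂ) :
    0 ≤ (star x ⬝ᵥ A *ᵥ x).re ∧
      |(star x ⬝ᵥ A *ᵥ x).im| ≤ (star x ⬝ᵥ A *ᵥ x).re * Real.tan α := by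
  by_cases hx : x = 0
  · subst hx; simp
  · exact ⟨(sector_qf hA hx).1.le, (sector_qf hA hx).2⟩

end sect

section polar
variable {m : Type*} [Fintype m]

lemma polar_K {K : Matrix m m ℂ} (hK : Kᴴ = K) (u v : m → ℂ) :
    (star (u + v) ⬝ᵥ K *ᵥ (u + v)).re - (star (u - v) ⬝ᵥ K *ᵥ (u - v)).re
      = 4 * (star u ⬝ᵥ K *ᵥ v).re := by
  have hvu : star v ⬝ᵥ K *ᵥ u = star (star u ⬝ᵥ K *ᵥ v) := herm_dot hK u v
  have h : star (u + v) ⬝ᵥ K *ᵥ (u + v) - star (u - v) ⬝ᵥ K *ᵥ (u - v)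
      = 2 * (star u ⬝ᵥ K *ᵥ v + star v ⬝ᵥ K *ᵥ u) := by
    simp only [Matrix.mulVec_add, Matrix.mulVec_sub, star_add, star_sub,
      add_dotProduct, sub_dotProduct, dotProduct_add,
      dotProduct_sub]
    ring
  rw [hvu, Complex.star_def, Complex.add_conj] at h
  have h2 := congrArg Complex.re h
  rw [Complex.sub_re] at h2
  rw [h2]
  push_cast
  simp [Complex.mul_re]
  ring

lemma parallelogram_H (H : Matrix m m ℂ) (u v : m → ℂ) :
    (star (u + v) ⬝ᵥ H *ᵥ (u + v)).re + (star (u - v) ⬝ᵥ H *ᵥ (u - v)).re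
      = 2 * (star u ⬝ᵥ H *ᵥ u).re + 2 * (star v ⬝ᵥ H *ᵥ v).re := by
  have h : star (u + v) ⬝ᵥ H *ᵥ (u + v) + star (u - v) ⬝ᵥ H *ᵥ (u - v)
      = 2 * (star u ⬝ᵥ H *ᵥ u) + 2 * (star v ⬝ᵥ H *ᵥ v) := by
    simp only [Matrix.mulVec_add, Matrix.mulVec_sub, star_add, star_sub,
      add_dotProduct, sub_dotProduct, dotProduct_add,
      dotProduct_sub]
    ring
  have h2 := congrArg Complex.re h
  rw [Complex.add_re] at h2
  rw [h2]
  simp [Complex.mul_re]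

lemma re_bilin_le {K H : Matrix m m ℂ} {t : ℝ} (hK : Kᴴ = K)
    (hb : ∀ x : m → ℂ, |(star x ⬝ᵥ K *ᵥ x).re| ≤ t * (star x ⬝ᵥ H *ᵥ x).re)
    (u v : m → ℂ) :
    (star u ⬝ᵥ K *ᵥ v).re
      ≤ t / 2 * ((star u ⬝ᵥ H *ᵥ u).re + (star v ⬝ᵥ H *ᵥ v).re) := by
  have h1 := polar_K hK u v
  have h2 := parallelogram_H H u v
  have h3 := (abs_le.mp (hb (u + v))).2
  have h4 := (abs_le.mp (hb (u - v))).1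
  have h2t : t * ((star (u + v) ⬝ᵥ H *ᵥ (u + v)).re + (star (u - v) ⬝ᵥ H *ᵥ (u - v)).re)
      = t * (2 * (star u ⬝ᵥ H *ᵥ u).re + 2 * (star v ⬝ᵥ H *ᵥ v).re) := by rw [h2]
  linarith

lemma key_arith {a b t : ℝ} (ha : 0 ≤ a) (hb : 0 ≤ b) (ht : 0 ≤ t)
    (h : ∀ s : ℝ, 0 < s → a ≤ t / 2 * (s * a + s⁻¹ * b)) : a ≤ t ^ 2 * b := by
  rcases eq_or_lt_of_le ha with ha0 | hapos
  · nlinarith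
  rcases eq_or_lt_of_le ht with ht0 | htpos
  · have := h 1 one_pos
    nlinarith
  rcases eq_or_lt_of_le hb with hb0 | hbpos
  · exfalso
    have := h t⁻¹ (inv_pos.mpr htpos)
    rw [← hb0] at this
    have h2 : t * t⁻¹ = 1 := mul_inv_cancel₀ htpos.ne'
    nlinarith
  · have hs : (0:ℝ) < Real.sqrt b / Real.sqrt a :=
      div_pos (Real.sqrt_pos.mpr hbpos) (Real.sqrt_pos.mpr hapos)
    have := h _ hs
    have hsa : Real.sqrt a ^ 2 = a := Real.sq_sqrt ha
    have hsb : Real.sqrt b ^ 2 = b := Real.sq_sqrt hb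
    have hsa' : (0:ℝ) < Real.sqrt a := Real.sqrt_pos.mpr hapos
    have hsb' : (0:ℝ) < Real.sqrt b := Real.sqrt_pos.mpr hbpos
    have e1 : (Real.sqrt b / Real.sqrt a) * a = Real.sqrt a * Real.sqrt b := by
      field_simp
      nlinarith
    have e2 : (Real.sqrt b / Real.sqrt a)⁻¹ * b = Real.sqrt a * Real.sqrt b := by
      rw [inv_div]
      field_simp
      nlinarith
    rw [e1, e2] at this
    -- this : a ≤ t / 2 * (√a√b + √a√b) = t√a√b
    have h5 : a ≤ t * (Real.sqrt a * Real.sqrt b) := by linarith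
    have h6 : a * a ≤ (t * (Real.sqrt a * Real.sqrt b)) * (t * (Real.sqrt a * Real.sqrt b)) :=
      mul_le_mul h5 h5 ha (by positivity)
    have h7 : (t * (Real.sqrt a * Real.sqrt b)) * (t * (Real.sqrt a * Real.sqrt b))
        = t ^ 2 * (Real.sqrt a ^ 2 * Real.sqrt b ^ 2) := by ring
    rw [h7, hsa, hsb] at h6
    nlinarith [h6, hapos]

end polar

section blocks
variable {p q : ℕ}

lemma star_sum_elim (x : Fin p → ℂ) (y : Fin q → ℂ) :
    star (Sum.elim x y) = Sum.elim (star x) (star y) := by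
  funext i; cases i <;> rfl

lemma mulVec_sum_elim (M : Matrix (Fin p ⊕ Fin q) (Fin p ⊕ Fin q) ℂ)
    (x : Fin p → ℂ) (y : Fin q → ℂ) :
    M *ᵥ Sum.elim x y
      = Sum.elim (M.toBlocks₁₁ *ᵥ x + M.toBlocks₁₂ *ᵥ y)
        (M.toBlocks₂₁ *ᵥ x + M.toBlocks₂₂ *ᵥ y) := by
  conv_lhs => rw [← Matrix.fromBlocks_toBlocks M]
  rw [Matrix.fromBlocks_mulVec, Sum.elim_comp_inl, Sum.elim_comp_inr]

lemma block_dot (M : Matrix (Fin p ⊕ Fin q) (Fin p ⊕ Fin q) ℂ)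
    (x x' : Fin p → ℂ) (y y' : Fin q → ℂ) :
    star (Sum.elim x y) ⬝ᵥ M *ᵥ Sum.elim x' y'
      = star x ⬝ᵥ (M.toBlocks₁₁ *ᵥ x' + M.toBlocks₁₂ *ᵥ y')
        + star y ⬝ᵥ (M.toBlocks₂₁ *ᵥ x' + M.toBlocks₂₂ *ᵥ y') := by
  rw [mulVec_sum_elim, star_sum_elim, sumElim_dotProduct_sumElim]

/-- The (1,1) block of a matrix with positive-real quadratic form is invertible. -/
lemma blocks11_inv {M : Matrix (Fin p ⊕ Fin q) (Fin p ⊕ Fin q) ℂ}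
    (hpos : ∀ z : Fin p ⊕ Fin q → ℂ, z ≠ 0 → 0 < (star z ⬝ᵥ M *ᵥ z).re) :
    M.toBlocks₁₁ * (M.toBlocks₁₁)⁻¹ = 1 := by
  apply Matrix.mul_nonsing_inv
  rw [isUnit_iff_ne_zero]
  intro hdet
  obtain ⟨v, hv, hv0⟩ := (Matrix.exists_mulVec_eq_zero_iff).mpr hdet
  have hz : (Sum.elim v 0 : Fin p ⊕ Fin q → ℂ) ≠ 0 := by
    intro h
    apply hv
    funext i
    exact congrFun h (Sum.inl i)
  have := hpos _ hz
  rw [block_dot, hv0] at this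
  simp at this

/-- Quadratic form of the Schur complement. -/
lemma schur_dot {M : Matrix (Fin p ⊕ Fin q) (Fin p ⊕ Fin q) ℂ}
    (hinv : M.toBlocks₁₁ * (M.toBlocks₁₁)⁻¹ = 1) (y : Fin q → ℂ) :
    star (Sum.elim (-((M.toBlocks₁₁)⁻¹ * M.toBlocks₁₂) *ᵥ y) y) ⬝ᵥ
        M *ᵥ (Sum.elim (-((M.toBlocks₁₁)⁻¹ * M.toBlocks₁₂) *ᵥ y) y)
      = star y ⬝ᵥ schur M *ᵥ y := by
  have hfirst : M.toBlocks₁₁ *ᵥ (-((M.toBlocks₁₁)⁻¹ * M.toBlocks₁₂) *ᵥ y)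
      + M.toBlocks₁₂ *ᵥ y = 0 := by
    rw [Matrix.neg_mulVec, Matrix.mulVec_neg, Matrix.mulVec_mulVec, ← Matrix.mul_assoc,
      hinv, Matrix.one_mul]
    simp
  rw [block_dot, hfirst]
  simp only [dotProduct_zero, zero_add]
  rw [schur]
  congr 1
  rw [Matrix.neg_mulVec, Matrix.mulVec_neg, Matrix.mulVec_mulVec, ← Matrix.mul_assoc]
  rw [Matrix.sub_mulVec]
  abel

lemma first_block_zero {M : Matrix (Fin p ⊕ Fin q) (Fin p ⊕ Fin q) ℂ}
    (hinv : M.toBlocks₁₁ * (M.toBlocks₁₁)⁻¹ = 1) (y : Fin q → ℂ) :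
    M.toBlocks₁₁ *ᵥ (-((M.toBlocks₁₁)⁻¹ * M.toBlocks₁₂) *ᵥ y)
      + M.toBlocks₁₂ *ᵥ y = 0 := by
  rw [Matrix.neg_mulVec, Matrix.mulVec_neg, Matrix.mulVec_mulVec, ← Matrix.mul_assoc,
    hinv, Matrix.one_mul]
  simp

/-- A vector supported on the first block pairs to zero with a vector whose image's
first block vanishes. -/
lemma left_dot_zero (M : Matrix (Fin p ⊕ Fin q) (Fin p ⊕ Fin q) ℂ)
    (w₁ x : Fin p → ℂ) (y : Fin q → ℂ)
    (h : M.toBlocks₁₁ *ᵥ x + M.toBlocks₁₂ *ᵥ y = 0) :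
    star (Sum.elim w₁ 0) ⬝ᵥ M *ᵥ Sum.elim x y = 0 := by
  rw [block_dot, h]
  simp

end blocks

noncomputable def matIm {m : Type*} [Fintype m] (A : Matrix m m ℂ) : Matrix m m ℂ :=
  (-(Complex.I) / 2) • (A - Aᴴ)

section im
variable {m : Type*} [Fintype m]

lemma matIm_herm (A : Matrix m m ℂ) : (matIm A)ᴴ = matIm A := by
  ext i j
  simp [matIm, Matrix.conjTranspose_apply]
  ring

lemma qf_matIm (A : Matrix m m ℂ) (x : m → ℂ) :
    star x ⬝ᵥ (matIm A) *ᵥ x = ((star x ⬝ᵥ A *ᵥ x).im : ℂ) := by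
  rw [matIm, Matrix.smul_mulVec, dotProduct_smul, Matrix.sub_mulVec,
    dotProduct_sub, dot_conjT]
  rw [Complex.star_def, Complex.sub_conj]
  rw [smul_eq_mul]
  push_cast
  ring_nf
  rw [Complex.I_sq]
  ring

lemma matRe_add_I_matIm (A : Matrix m m ℂ) : matRe A + Complex.I • matIm A = A := by
  ext i j
  simp [matRe, matIm]
  ring_nf
  rw [Complex.I_sq]
  ring

end im

section shb
variable {p q : ℕ} (M : Matrix (Fin p ⊕ Fin q) (Fin p ⊕ Fin q) ℂ)

lemma toBlocks11_conjT : (Mᴴ).toBlocks₁₁ = (M.toBlocks₁₁)ᴴ := rfl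
lemma toBlocks12_conjT : (Mᴴ).toBlocks₁₂ = (M.toBlocks₂₁)ᴴ := rfl
lemma toBlocks21_conjT : (Mᴴ).toBlocks₂₁ = (M.toBlocks₁₂)ᴴ := rfl
lemma toBlocks22_conjT : (Mᴴ).toBlocks₂₂ = (M.toBlocks₂₂)ᴴ := rfl

lemma schur_herm {M : Matrix (Fin p ⊕ Fin q) (Fin p ⊕ Fin q) ℂ} (hM : Mᴴ = M) :
    (schur M)ᴴ = schur M := by
  have h11 : (M.toBlocks₁₁)ᴴ = M.toBlocks₁₁ := by rw [← toBlocks11_conjT, hM]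
  have h12 : (M.toBlocks₁₂)ᴴ = M.toBlocks₂₁ := by rw [← toBlocks21_conjT, hM]
  have h21 : (M.toBlocks₂₁)ᴴ = M.toBlocks₁₂ := by rw [← toBlocks12_conjT, hM]
  have h22 : (M.toBlocks₂₂)ᴴ = M.toBlocks₂₂ := by rw [← toBlocks22_conjT, hM]
  rw [schur, Matrix.conjTranspose_sub, h22, Matrix.conjTranspose_mul,
    Matrix.conjTranspose_mul, Matrix.conjTranspose_nonsing_inv, h11, h12, h21,
    Matrix.mul_assoc]

end shb

section scale
variable {m : Type*} [Fintype m]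

lemma smul_qf (M : Matrix m m ℂ) (c : ℝ) (x : m → ℂ) :
    star ((c : ℂ) • x) ⬝ᵥ M *ᵥ ((c : ℂ) • x)
      = ((c ^ 2 : ℝ) : ℂ) * (star x ⬝ᵥ M *ᵥ x) := by
  rw [star_smul, smul_dotProduct, Matrix.mulVec_smul, dotProduct_smul,
    smul_eq_mul, smul_eq_mul, Complex.star_def, Complex.conj_ofReal]
  push_cast
  ring

lemma I_qf (M : Matrix m m ℂ) (x : m → ℂ) :
    star (Complex.I • x) ⬝ᵥ M *ᵥ (Complex.I • x) = star x ⬝ᵥ M *ᵥ x := by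
  rw [star_smul, smul_dotProduct, Matrix.mulVec_smul, dotProduct_smul,
    smul_eq_mul, smul_eq_mul, ← mul_assoc]
  simp [Complex.star_def]

lemma smul_bilin (M : Matrix m m ℂ) {c : ℝ} (hc : c ≠ 0) (u v : m → ℂ) :
    star ((c : ℂ) • u) ⬝ᵥ M *ᵥ (((c⁻¹ : ℝ) : ℂ) • v) = star u ⬝ᵥ M *ᵥ v := by
  rw [star_smul, smul_dotProduct, Matrix.mulVec_smul, dotProduct_smul,
    smul_eq_mul, smul_eq_mul, Complex.star_def, Complex.conj_ofReal, ← mul_assoc]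
  have : (c : ℂ) * ((c⁻¹ : ℝ) : ℂ) = 1 := by
    push_cast
    exact mul_inv_cancel₀ (by exact_mod_cast hc)
  rw [this, one_mul]

end scale

theorem sec_sq_schur_re_ge_re_schur {p q : ℕ} (α : ℝ) (hα : α ∈ Set.Ico 0 (Real.pi / 2))
    (A : Matrix (Fin p ⊕ Fin q) (Fin p ⊕ Fin q) ℂ) (hA : numericalRange A ⊆ sector α) :
    (((((Real.cos α)⁻¹ ^ 2 : ℝ) : ℂ) • schur (matRe A)) - matRe (schur A)).PosSemidef := by
  obtain ⟨hα0, hα2⟩ := hα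
  set t := Real.tan α with htdef
  have hcos : 0 < Real.cos α :=
    Real.cos_pos_of_mem_Ioo ⟨by linarith [Real.pi_pos], hα2⟩
  have ht : 0 ≤ t := Real.tan_nonneg_of_nonneg_of_le_pi_div_two hα0 hα2.le
  have hsec : (Real.cos α)⁻¹ ^ 2 = 1 + t ^ 2 := by
    rw [inv_pow, ← Real.inv_one_add_tan_sq hcos.ne', inv_inv]
  set H := matRe A with hHdef
  set K := matIm A with hKdef
  have hermH : Hᴴ = H := matRe_herm A
  have hermK : Kᴴ = K := matIm_herm A
  have hAHK : A = H + Complex.I • K := (matRe_add_I_matIm A).symm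
  have hposA : ∀ z : Fin p ⊕ Fin q → ℂ, z ≠ 0 → 0 < (star z ⬝ᵥ A *ᵥ z).re :=
    fun z hz => (sector_qf hA hz).1
  have hposH : ∀ z : Fin p ⊕ Fin q → ℂ, z ≠ 0 → 0 < (star z ⬝ᵥ H *ᵥ z).re := by
    intro z hz
    rw [hHdef, qf_matRe]
    simpa using hposA z hz
  have hAinv : A.toBlocks₁₁ * (A.toBlocks₁₁)⁻¹ = 1 := blocks11_inv hposA
  have hHinv : H.toBlocks₁₁ * (H.toBlocks₁₁)⁻¹ = 1 := blocks11_inv hposH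
  have hb : ∀ x : Fin p ⊕ Fin q → ℂ,
      |(star x ⬝ᵥ K *ᵥ x).re| ≤ t * (star x ⬝ᵥ H *ᵥ x).re := by
    intro x
    rw [hKdef, qf_matIm, hHdef, qf_matRe]
    simpa [mul_comm] using (sector_qf' hA x).2
  rw [Matrix.posSemidef_iff_dotProduct_mulVec]
  constructor
  · show _ = _
    rw [Matrix.conjTranspose_sub, Matrix.conjTranspose_smul, matRe_herm,
      schur_herm hermH, Complex.star_def, Complex.conj_ofReal]
  intro y
  -- the test vectors
  set x₁ : Fin p → ℂ := -((A.toBlocks₁₁)⁻¹ * A.toBlocks₁₂) *ᵥ y with hx₁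
  set x₀ : Fin p → ℂ := -((H.toBlocks₁₁)⁻¹ * H.toBlocks₁₂) *ᵥ y with hx₀
  set z : Fin p ⊕ Fin q → ℂ := Sum.elim x₁ y with hz
  set z₀ : Fin p ⊕ Fin q → ℂ := Sum.elim x₀ y with hz₀
  set w₁ : Fin p → ℂ := x₁ - x₀ with hw₁
  set w : Fin p ⊕ Fin q → ℂ := Sum.elim w₁ 0 with hw
  have hzsum : z = z₀ + w := by
    funext i
    cases i with
    | inl i => simp [hz, hz₀, hw, hw₁]
    | inr i => simp [hz, hz₀, hw]
  set a : ℝ := (star w ⬝ᵥ A *ᵥ w).re with ha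
  set b : ℝ := (star z₀ ⬝ᵥ A *ᵥ z₀).re with hbdef
  set r : ℝ := (star z ⬝ᵥ A *ᵥ z).re with hrdef
  have ha0 : 0 ≤ a := (sector_qf' hA w).1
  have hb0 : 0 ≤ b := (sector_qf' hA z₀).1
  -- quadratic forms of H
  have qHw : star w ⬝ᵥ H *ᵥ w = (a : ℂ) := by rw [hHdef, qf_matRe]
  have qHz₀ : star z₀ ⬝ᵥ H *ᵥ z₀ = (b : ℂ) := by rw [hHdef, qf_matRe]
  have qHz : star z ⬝ᵥ H *ᵥ z = (r : ℂ) := by rw [hHdef, qf_matRe]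
  -- first-block vanishing
  have hfbH : H.toBlocks₁₁ *ᵥ x₀ + H.toBlocks₁₂ *ᵥ y = 0 := first_block_zero hHinv y
  have hfbA : A.toBlocks₁₁ *ᵥ x₁ + A.toBlocks₁₂ *ᵥ y = 0 := first_block_zero hAinv y
  have hwHz₀ : star w ⬝ᵥ H *ᵥ z₀ = 0 := left_dot_zero H w₁ x₀ y hfbH
  have hz₀Hw : star z₀ ⬝ᵥ H *ᵥ w = 0 := by
    rw [herm_dot hermH w z₀, hwHz₀, star_zero]
  have hwAz : star w ⬝ᵥ A *ᵥ z = 0 := left_dot_zero A w₁ x₁ y hfbA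
  -- splitting r = b + a
  have hsplit : r = b + a := by
    have e : star z ⬝ᵥ H *ᵥ z
        = star z₀ ⬝ᵥ H *ᵥ z₀ + star z₀ ⬝ᵥ H *ᵥ w + (star w ⬝ᵥ H *ᵥ z₀ + star w ⬝ᵥ H *ᵥ w) := by
      rw [hzsum]
      simp only [star_add, Matrix.mulVec_add, add_dotProduct, dotProduct_add]
      ring
    rw [qHz, qHz₀, qHw, hwHz₀, hz₀Hw] at e
    have : (r : ℂ) = ((b + a : ℝ) : ℂ) := by rw [e]; push_cast; ring
    exact_mod_cast this
  -- a = Im (w* K z₀)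
  have hwHz : star w ⬝ᵥ H *ᵥ z = (a : ℂ) := by
    rw [hzsum]
    simp only [Matrix.mulVec_add, dotProduct_add]
    rw [hwHz₀, qHw, zero_add]
  have hwKz : star w ⬝ᵥ K *ᵥ z
      = star w ⬝ᵥ K *ᵥ z₀ + ((star w ⬝ᵥ A *ᵥ w).im : ℂ) := by
    rw [hzsum]
    simp only [Matrix.mulVec_add, dotProduct_add]
    rw [hKdef, qf_matIm]
  have hdecomp : (0 : ℂ) = (a : ℂ) + Complex.I * (star w ⬝ᵥ K *ᵥ z) := by
    have : star w ⬝ᵥ A *ᵥ z = star w ⬝ᵥ H *ᵥ z + Complex.I * (star w ⬝ᵥ K *ᵥ z) := by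
      conv_lhs => rw [hAHK]
      simp only [Matrix.add_mulVec, dotProduct_add, Matrix.smul_mulVec,
        dotProduct_smul, smul_eq_mul]
    rw [this, hwHz] at hwAz
    rw [← hwAz]
  have haim : a = (star w ⬝ᵥ K *ᵥ z₀).im := by
    rw [hwKz] at hdecomp
    have := congrArg Complex.re hdecomp
    simp [Complex.add_re, Complex.mul_re] at this
    linarith
  -- the scaled Cauchy-Schwarz bound
  have hkey : ∀ s : ℝ, 0 < s → a ≤ t / 2 * (s * a + s⁻¹ * b) := by
    intro s hs
    have hss : Real.sqrt s ≠ 0 := (Real.sqrt_pos.mpr hs).ne'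
    set u₀ : Fin p ⊕ Fin q → ℂ := Complex.I • w with hu₀
    have hre : (star u₀ ⬝ᵥ K *ᵥ z₀).re = a := by
      rw [hu₀, star_smul, smul_dotProduct]
      rw [show (star Complex.I : ℂ) = -Complex.I by simp [Complex.star_def]]
      rw [smul_eq_mul]
      have : (-Complex.I * (star w ⬝ᵥ K *ᵥ z₀)).re = (star w ⬝ᵥ K *ᵥ z₀).im := by
        simp [Complex.mul_re]
      rw [this, ← haim]
    have hmain := re_bilin_le hermK hb (((Real.sqrt s : ℝ) : ℂ) • u₀)
      ((((Real.sqrt s)⁻¹ : ℝ) : ℂ) • z₀)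
    rw [smul_bilin K hss u₀ z₀] at hmain
    rw [hre] at hmain
    have e1 : star (((Real.sqrt s : ℝ) : ℂ) • u₀) ⬝ᵥ H *ᵥ (((Real.sqrt s : ℝ) : ℂ) • u₀)
        = ((s : ℝ) : ℂ) * (a : ℂ) := by
      rw [smul_qf H (Real.sqrt s) u₀, Real.sq_sqrt hs.le, hu₀, I_qf, qHw]
    have e2 : star ((((Real.sqrt s)⁻¹ : ℝ) : ℂ) • z₀) ⬝ᵥ H *ᵥ ((((Real.sqrt s)⁻¹ : ℝ) : ℂ) • z₀)
        = ((s⁻¹ : ℝ) : ℂ) * (b : ℂ) := by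
      rw [smul_qf H (Real.sqrt s)⁻¹ z₀, qHz₀, inv_pow, Real.sq_sqrt hs.le]
    rw [e1, e2] at hmain
    have : (((s : ℝ) : ℂ) * (a : ℂ)).re = s * a := by
      rw [← Complex.ofReal_mul]; exact Complex.ofReal_re _
    rw [this] at hmain
    have : (((s⁻¹ : ℝ) : ℂ) * (b : ℂ)).re = s⁻¹ * b := by
      rw [← Complex.ofReal_mul]; exact Complex.ofReal_re _
    rw [this] at hmain
    exact hmain
  have hab : a ≤ t ^ 2 * b := key_arith ha0 hb0 ht hkey
  -- final computation
  have hSy : star y ⬝ᵥ schur H *ᵥ y = (b : ℂ) := by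
    rw [← schur_dot hHinv y, ← hx₀, ← hz₀, qHz₀]
  have hRy : star y ⬝ᵥ matRe (schur A) *ᵥ y = (r : ℂ) := by
    rw [qf_matRe, ← schur_dot hAinv y, ← hx₁, ← hz]
  calc (0 : ℂ) ≤ (((1 + t ^ 2) * b - r : ℝ) : ℂ) := by
        rw [Complex.zero_le_real]
        nlinarith
    _ = star y ⬝ᵥ ((((Real.cos α)⁻¹ ^ 2 : ℝ) : ℂ) • schur H - matRe (schur A)) *ᵥ y := by
        rw [Matrix.sub_mulVec, dotProduct_sub, Matrix.smul_mulVec,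
          dotProduct_smul, smul_eq_mul, hSy, hRy, hsec]
        push_cast
        ring
end

section
/- Let α ∈ [0, π/2) and let A, B be n×n complex matrices with W(A), W(B) ⊆ S_α, conformally partitioned into 2×2 blocks with square diagonal blocks. Then sec²(α) · Re((A+B)/(A_{11}+B_{11})) ≥ Re(A/A_{11}) + Re(B/B_{11}) in the Loewner order. -/
open Matrix ComplexOrder

-- scaling core lemma
lemma quad_scale {m : Type*} [Fintype m] {α : ℝ} {X : Matrix m m ℂ}
    (hX : numericalRange X ⊆ sector α) {y : m → ℂ} (hy : y ≠ 0) :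
    ∃ n : ℝ, 0 < n ∧ ∃ z ∈ sector α, star y ⬝ᵥ X.mulVec y = (n : ℂ) * z := by
  have hn : (0:ℝ) < ∑ i, Complex.normSq (y i) := by
    obtain ⟨i, hi⟩ := Function.ne_iff.mp hy
    exact Finset.sum_pos' (fun j _ => Complex.normSq_nonneg _)
      ⟨i, Finset.mem_univ i, by simpa using Complex.normSq_pos.2 hi⟩
  set n : ℝ := ∑ i, Complex.normSq (y i) with hn_def
  have hyy : star y ⬝ᵥ y = (n : ℂ) := by
    simp [dotProduct, hn_def, Complex.normSq_eq_conj_mul_self]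
  set c : ℝ := (Real.sqrt n)⁻¹ with hc
  have hc2 : c ^ 2 * n = 1 := by
    rw [hc, ← Real.sqrt_inv]
    rw [Real.sq_sqrt (by positivity)]
    field_simp
  have hcy : star ((c:ℂ) • y) ⬝ᵥ ((c:ℂ) • y) = 1 := by
    rw [star_smul, smul_dotProduct, dotProduct_smul, hyy]
    push_cast
    simp only [smul_eq_mul, Complex.star_def, Complex.conj_ofReal]
    rw [← Complex.ofReal_mul, ← Complex.ofReal_mul]
    norm_cast
    rw [← hc2]; ring
  have hz : star ((c:ℂ) • y) ⬝ᵥ X.mulVec ((c:ℂ) • y) ∈ sector α := by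
    apply hX
    exact ⟨(c:ℂ) • y, hcy, rfl⟩
  refine ⟨n, hn, star ((c:ℂ) • y) ⬝ᵥ X.mulVec ((c:ℂ) • y), hz, ?_⟩
  rw [star_smul, smul_dotProduct, Matrix.mulVec_smul, dotProduct_smul]
  simp only [smul_eq_mul, Complex.star_def, Complex.conj_ofReal]
  rw [← mul_assoc, ← mul_assoc]
  rw [show ((n:ℂ) * c * c) = ((c^2*n : ℝ) : ℂ) by push_cast; ring, hc2]
  simp

lemma re_pos {m : Type*} [Fintype m] {α : ℝ} {X : Matrix m m ℂ}
    (hX : numericalRange X ⊆ sector α) {y : m → ℂ} (hy : y ≠ 0) :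
    0 < (star y ⬝ᵥ X.mulVec y).re := by
  obtain ⟨n, hn, z, hz, he⟩ := quad_scale hX hy
  rw [he]
  simp only [Complex.mul_re, Complex.ofReal_re, Complex.ofReal_im, zero_mul, sub_zero]
  exact mul_pos hn hz.1

lemma re_nonneg {m : Type*} [Fintype m] {α : ℝ} {X : Matrix m m ℂ}
    (hX : numericalRange X ⊆ sector α) (y : m → ℂ) :
    0 ≤ (star y ⬝ᵥ X.mulVec y).re := by
  by_cases hy : y = 0
  · simp [hy]
  · exact (re_pos hX hy).le

lemma im_le {m : Type*} [Fintype m] {α : ℝ} {X : Matrix m m ℂ}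
    (hX : numericalRange X ⊆ sector α) (y : m → ℂ) :
    |(star y ⬝ᵥ X.mulVec y).im| ≤ Real.tan α * (star y ⬝ᵥ X.mulVec y).re := by
  by_cases hy : y = 0
  · simp [hy]
  · obtain ⟨n, hn, z, hz, he⟩ := quad_scale hX hy
    rw [he]
    simp only [Complex.mul_re, Complex.mul_im, Complex.ofReal_re, Complex.ofReal_im,
      zero_mul, sub_zero, add_zero]
    rw [abs_mul, abs_of_pos hn]
    calc n * |z.im| ≤ n * (z.re * Real.tan α) := by
          exact mul_le_mul_of_nonneg_left hz.2 hn.le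
      _ = Real.tan α * (n * z.re) := by ring

-- block identity
lemma mulVec_schurVec {p q : ℕ} {X : Matrix (Fin p ⊕ Fin q) (Fin p ⊕ Fin q) ℂ}
    (h11 : IsUnit X.toBlocks₁₁.det) (x : Fin q → ℂ) :
    X *ᵥ (Sum.elim (-((X.toBlocks₁₁)⁻¹ * X.toBlocks₁₂) *ᵥ x) x) =
      Sum.elim (0 : Fin p → ℂ) ((schur X) *ᵥ x) := by
  conv_lhs => rw [← fromBlocks_toBlocks X, fromBlocks_mulVec]
  simp only [toBlocks_fromBlocks₁₁, toBlocks_fromBlocks₁₂, toBlocks_fromBlocks₂₁,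
    toBlocks_fromBlocks₂₂, Sum.elim_comp_inl, Sum.elim_comp_inr]
  have hb1 : X.toBlocks₁₁ *ᵥ (-((X.toBlocks₁₁⁻¹ * X.toBlocks₁₂) *ᵥ x)) + X.toBlocks₁₂ *ᵥ x
      = (0 : Fin p → ℂ) := by
    rw [Matrix.mulVec_neg, Matrix.mulVec_mulVec, ← Matrix.mul_assoc,
      Matrix.mul_nonsing_inv _ h11, Matrix.one_mul]
    simp
  have hb2 : X.toBlocks₂₁ *ᵥ (-((X.toBlocks₁₁⁻¹ * X.toBlocks₁₂) *ᵥ x)) + X.toBlocks₂₂ *ᵥ x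
      = schur X *ᵥ x := by
    rw [Matrix.mulVec_neg, Matrix.mulVec_mulVec, ← Matrix.mul_assoc, schur, Matrix.sub_mulVec]
    abel
  simp only [Matrix.neg_mulVec]
  rw [hb1, hb2]

lemma star_sumElim {p q : ℕ} (a : Fin p → ℂ) (b : Fin q → ℂ) :
    star (Sum.elim a b) = Sum.elim (star a) (star b) := by
  funext i; cases i <;> rfl

lemma dot_schur {p q : ℕ} {X : Matrix (Fin p ⊕ Fin q) (Fin p ⊕ Fin q) ℂ}
    (h11 : IsUnit X.toBlocks₁₁.det) (x : Fin q → ℂ) :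
    star (Sum.elim (-((X.toBlocks₁₁)⁻¹ * X.toBlocks₁₂) *ᵥ x) x) ⬝ᵥ
      (X *ᵥ (Sum.elim (-((X.toBlocks₁₁)⁻¹ * X.toBlocks₁₂) *ᵥ x) x)) =
      star x ⬝ᵥ (schur X) *ᵥ x := by
  rw [mulVec_schurVec h11, star_sumElim, dotProduct_block]
  simp [Sum.elim_comp_inl, Sum.elim_comp_inr]

lemma dot_zero_inr {p q : ℕ} {X : Matrix (Fin p ⊕ Fin q) (Fin p ⊕ Fin q) ℂ}
    (h11 : IsUnit X.toBlocks₁₁.det) (x : Fin q → ℂ) (d : Fin p ⊕ Fin q → ℂ)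
    (hd : ∀ j, d (Sum.inr j) = 0) :
    star d ⬝ᵥ (X *ᵥ (Sum.elim (-((X.toBlocks₁₁)⁻¹ * X.toBlocks₁₂) *ᵥ x) x)) = 0 := by
  rw [mulVec_schurVec h11, dotProduct_block]
  have h2 : (star d ∘ Sum.inr) = 0 := by funext j; simp [hd j]
  simp [Sum.elim_comp_inl, Sum.elim_comp_inr, h2]

lemma det11_unit {p q : ℕ} {α : ℝ} {X : Matrix (Fin p ⊕ Fin q) (Fin p ⊕ Fin q) ℂ}
    (hX : numericalRange X ⊆ sector α) : IsUnit X.toBlocks₁₁.det := by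
  rw [isUnit_iff_ne_zero]
  intro hdet
  obtain ⟨v, hv0, hvk⟩ := (Matrix.exists_mulVec_eq_zero_iff).2 hdet
  set y : Fin p ⊕ Fin q → ℂ := Sum.elim v 0 with hy_def
  have hy : y ≠ 0 := by
    intro h
    apply hv0
    funext i
    have := congrFun h (Sum.inl i)
    simpa [hy_def] using this
  have hpos := re_pos hX hy
  have hzero : star y ⬝ᵥ X.mulVec y = 0 := by
    have : X *ᵥ y = Sum.elim (0 : Fin p → ℂ) (X.toBlocks₂₁ *ᵥ v) := by
      conv_lhs => rw [← fromBlocks_toBlocks X]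
      rw [hy_def, fromBlocks_mulVec]
      simp only [toBlocks_fromBlocks₁₁, toBlocks_fromBlocks₁₂, toBlocks_fromBlocks₂₁,
        toBlocks_fromBlocks₂₂, Sum.elim_comp_inl, Sum.elim_comp_inr]
      congr 1 <;> simp [hvk]
    rw [show X.mulVec y = Sum.elim (0 : Fin p → ℂ) (X.toBlocks₂₁ *ᵥ v) from this]
    rw [hy_def, star_sumElim, dotProduct_block]
    simp
  rw [hzero] at hpos
  simp at hpos

lemma quad_disc {A B C : ℝ} (hA : 0 ≤ A) (hB : 0 ≤ B) (hC : 0 ≤ C)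
    (h : ∀ r : ℝ, 0 ≤ r → 0 ≤ A - B * r + C * r ^ 2) : B ^ 2 ≤ 4 * A * C := by
  rcases hC.eq_or_lt with hC0 | hC0
  · rcases hB.eq_or_lt with hB0 | hB0
    · nlinarith
    · have h1 := h ((A + 1) / B) (by positivity)
      have hB' : B * ((A + 1) / B) = A + 1 := by field_simp
      nlinarith
  · have h1 := h (B / (2 * C)) (by positivity)
    have h2 : (0:ℝ) < 2 * C := by linarith
    have h3 : C * (B / (2 * C)) ^ 2 = B ^ 2 / (4 * C) := by field_simp; ring
    have h4 : B * (B / (2 * C)) = B ^ 2 / (2 * C) := by field_simp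
    rw [h3, h4] at h1
    have h5 : 0 ≤ (A - B ^ 2 / (2 * C) + B ^ 2 / (4 * C)) * (4 * C) := by positivity
    have h6 : (A - B ^ 2 / (2 * C) + B ^ 2 / (4 * C)) * (4 * C) = 4 * A * C - B ^ 2 := by
      field_simp; ring
    linarith [h6 ▸ h5]


set_option maxHeartbeats 1000000 in
lemma final_arith {ca sa t pz Pz qc Qc ab br : ℝ}
    (hca : 0 < ca) (hcs : sa ^ 2 + ca ^ 2 = 1) (hsc : sa = t * ca) (ht : 0 ≤ t)
    (hzre : 0 ≤ pz) (hzim : |Pz| ≤ t * pz) (hcre : 0 ≤ qc) (hcim : |Qc| ≤ t * qc)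
    (hab : 0 ≤ ab) (hbre : -ab ≤ br)
    (hc1 : (ab / ca) ^ 2 ≤ 4 * (t * pz - Pz) * (t * qc - Qc))
    (hc2 : (ab / ca) ^ 2 ≤ 4 * (t * pz + Pz) * (t * qc + Qc)) :
    ca ^ 2 * pz ≤ pz + br + qc := by
  obtain ⟨hl1, hr1⟩ := abs_le.mp hzim
  obtain ⟨hl2, hr2⟩ := abs_le.mp hcim
  have hBq0 : 0 ≤ (ab / ca) ^ 2 := by positivity
  have hE1 : (0:ℝ) ≤ 4 * (t * pz - Pz) * (t * qc - Qc) :=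
    mul_nonneg (mul_nonneg (by norm_num) (by linarith)) (by linarith)
  have hmm := mul_le_mul hc1 hc2 hBq0 hE1
  have hprod : ((ab / ca) ^ 2) ^ 2
      ≤ 16 * (t ^ 2 * pz ^ 2 - Pz ^ 2) * (t ^ 2 * qc ^ 2 - Qc ^ 2) := by
    calc ((ab / ca) ^ 2) ^ 2 = (ab / ca) ^ 2 * (ab / ca) ^ 2 := by ring
      _ ≤ (4 * (t * pz - Pz) * (t * qc - Qc)) * (4 * (t * pz + Pz) * (t * qc + Qc)) := hmm
      _ = 16 * (t ^ 2 * pz ^ 2 - Pz ^ 2) * (t ^ 2 * qc ^ 2 - Qc ^ 2) := by ring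
  have hXnn : (0:ℝ) ≤ t ^ 2 * pz ^ 2 - Pz ^ 2 := by
    have := mul_nonneg (show (0:ℝ) ≤ t * pz - Pz by linarith)
      (show (0:ℝ) ≤ t * pz + Pz by linarith)
    nlinarith [this]
  have hYnn : (0:ℝ) ≤ t ^ 2 * qc ^ 2 - Qc ^ 2 := by
    have := mul_nonneg (show (0:ℝ) ≤ t * qc - Qc by linarith)
      (show (0:ℝ) ≤ t * qc + Qc by linarith)
    nlinarith [this]
  have hKnn : (0:ℝ) ≤ 4 * t ^ 2 * pz * qc :=
    mul_nonneg (mul_nonneg (by positivity) hzre) hcre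
  have s1 : 16 * (t ^ 2 * pz ^ 2 - Pz ^ 2) * (t ^ 2 * qc ^ 2 - Qc ^ 2)
      ≤ (4 * t ^ 2 * pz * qc) ^ 2 := by
    have a1 : 16 * (t ^ 2 * pz ^ 2 - Pz ^ 2) ≤ 16 * (t ^ 2 * pz ^ 2) := by
      nlinarith [sq_nonneg Pz]
    have a2 := mul_le_mul_of_nonneg_right a1 hYnn
    have a3 : 16 * (t ^ 2 * pz ^ 2) * (t ^ 2 * qc ^ 2 - Qc ^ 2)
        ≤ 16 * (t ^ 2 * pz ^ 2) * (t ^ 2 * qc ^ 2) := by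
      apply mul_le_mul_of_nonneg_left _ (by positivity)
      nlinarith [sq_nonneg Qc]
    have e2 : 16 * (t ^ 2 * pz ^ 2) * (t ^ 2 * qc ^ 2) = (4 * t ^ 2 * pz * qc) ^ 2 := by ring
    linarith [a2, a3, e2.ge]
  have h2 : ((ab / ca) ^ 2) ^ 2 ≤ (4 * t ^ 2 * pz * qc) ^ 2 := le_trans hprod s1
  have hfin : (ab / ca) ^ 2 ≤ 4 * t ^ 2 * pz * qc := by
    have hs := Real.sqrt_le_sqrt h2
    rwa [Real.sqrt_sq hBq0, Real.sqrt_sq hKnn] at hs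
  have habsb : ab ^ 2 ≤ 4 * sa ^ 2 * pz * qc := by
    have he : ab ^ 2 = (ab / ca) ^ 2 * ca ^ 2 := by field_simp
    have hm := mul_le_mul_of_nonneg_right hfin (sq_nonneg ca)
    have e3 : 4 * t ^ 2 * pz * qc * ca ^ 2 = 4 * (t * ca) ^ 2 * pz * qc := by ring
    rw [he, hsc]
    linarith [hm, e3.ge]
  have hqnn : (0:ℝ) ≤ sa ^ 2 * pz + qc := by
    have := mul_nonneg (sq_nonneg sa) hzre
    linarith
  have hsub2 : ab ^ 2 ≤ (sa ^ 2 * pz + qc) ^ 2 := by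
    nlinarith [habsb, sq_nonneg (sa ^ 2 * pz - qc)]
  have hsub : ab ≤ sa ^ 2 * pz + qc := by
    have hs := Real.sqrt_le_sqrt hsub2
    rwa [Real.sqrt_sq hab, Real.sqrt_sq hqnn] at hs
  have hid : sa ^ 2 * pz + ca ^ 2 * pz = pz := by linear_combination pz * hcs
  linarith [hbre, hsub, hid]

lemma key {p q : ℕ} {α : ℝ} (hα : α ∈ Set.Ico 0 (Real.pi / 2))
    {X : Matrix (Fin p ⊕ Fin q) (Fin p ⊕ Fin q) ℂ}
    (hX : numericalRange X ⊆ sector α) (x : Fin q → ℂ) (v : Fin p ⊕ Fin q → ℂ)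
    (hv : ∀ j, v (Sum.inr j) = x j) :
    Real.cos α ^ 2 * (star x ⬝ᵥ (schur X) *ᵥ x).re ≤ (star v ⬝ᵥ X *ᵥ v).re := by
  obtain ⟨hα0, hα1⟩ := hα
  have hpi := Real.pi_pos
  have hcos : 0 < Real.cos α := Real.cos_pos_of_mem_Ioo ⟨by linarith, hα1⟩
  have hsin : 0 ≤ Real.sin α := Real.sin_nonneg_of_nonneg_of_le_pi hα0 (by linarith)
  set τ := Real.tan α with hτ_def
  have hτ : 0 ≤ τ := by
    rw [hτ_def, Real.tan_eq_sin_div_cos]; positivity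
  have hsec : 1 + τ ^ 2 = (Real.cos α ^ 2)⁻¹ := by
    rw [hτ_def, ← Real.inv_one_add_tan_sq hcos.ne', inv_inv]
  have hsincos : Real.sin α = τ * Real.cos α := by
    rw [hτ_def, Real.tan_eq_sin_div_cos]; field_simp
  have h11 := det11_unit hX
  set u : Fin p ⊕ Fin q → ℂ := Sum.elim (-((X.toBlocks₁₁)⁻¹ * X.toBlocks₁₂) *ᵥ x) x with hu_def
  set d : Fin p ⊕ Fin q → ℂ := v - u with hd_def
  have hdinr : ∀ j, d (Sum.inr j) = 0 := by
    intro j; simp [hd_def, hu_def, hv j]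
  have hvud : v = u + d := by funext i; simp [hd_def]
  set z := star u ⬝ᵥ X *ᵥ u with hz_def
  set b := star u ⬝ᵥ X *ᵥ d with hb_def
  set c := star d ⬝ᵥ X *ᵥ d with hc_def
  have hz : z = star x ⬝ᵥ (schur X) *ᵥ x := dot_schur h11 x
  have hdu : star d ⬝ᵥ X *ᵥ u = 0 := dot_zero_inr h11 x d hdinr
  have hw : ∀ t : ℂ, star (u + t • d) ⬝ᵥ X *ᵥ (u + t • d)
      = z + t * b + (Complex.normSq t : ℂ) * c := by
    intro t
    rw [star_add, star_smul, Matrix.mulVec_add, Matrix.mulVec_smul]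
    simp only [dotProduct_add, add_dotProduct, dotProduct_smul, smul_dotProduct, smul_eq_mul]
    rw [hdu, Complex.normSq_eq_conj_mul_self]
    rw [← hz_def, ← hb_def, ← hc_def]
    simp [Complex.star_def]
    ring
  -- sector facts
  have hzre : 0 ≤ z.re := re_nonneg hX u
  have hzim : |z.im| ≤ τ * z.re := im_le hX u
  have hcre : 0 ≤ c.re := re_nonneg hX d
  have hcim : |c.im| ≤ τ * c.re := im_le hX d
  -- discriminant claim
  have claim : ∀ σ : ℝ, σ = 1 ∨ σ = -1 →
      (‖b‖ / Real.cos α) ^ 2 ≤ 4 * (τ * z.re - σ * z.im) * (τ * c.re - σ * c.im) := by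
    intro σ hσ
    have hσsq : σ ^ 2 = 1 := by rcases hσ with h | h <;> rw [h] <;> norm_num
    have hA : 0 ≤ τ * z.re - σ * z.im := by
      rcases abs_le.mp hzim with ⟨hl, hr⟩
      rcases hσ with h | h <;> rw [h] <;> linarith
    have hC : 0 ≤ τ * c.re - σ * c.im := by
      rcases abs_le.mp hcim with ⟨hl, hr⟩
      rcases hσ with h | h <;> rw [h] <;> linarith
    by_cases hb0 : b = 0
    · rw [hb0]; simp; positivity
    · set k : ℂ := b * (↑τ + ↑σ * Complex.I) with hk_def
      have hk2 : (↑τ + ↑σ * Complex.I : ℂ) ≠ 0 := by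
        intro h
        have := congrArg Complex.im h
        simp at this
        rcases hσ with h' | h' <;> rw [h'] at this <;> norm_num at this
      have hk0 : k ≠ 0 := mul_ne_zero hb0 hk2
      have habs2 : ‖(↑τ + ↑σ * Complex.I : ℂ)‖ = (Real.cos α)⁻¹ := by
        rw [Complex.norm_def]
        have : Complex.normSq (↑τ + ↑σ * Complex.I) = τ ^ 2 + 1 := by
          simp [Complex.normSq_apply]
          nlinarith [hσsq]
        rw [this, show τ ^ 2 + 1 = ((Real.cos α)⁻¹) ^ 2 by rw [inv_pow, ← hsec]; ring]
        exact Real.sqrt_sq (by positivity)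
      have habsk : ‖k‖ = ‖b‖ / Real.cos α := by
        rw [hk_def, norm_mul, habs2]; field_simp
      apply quad_disc hA (by positivity) hC
      intro r hr
      set s : ℝ := r / ‖k‖ with hs_def
      have hs : 0 ≤ s := by positivity
      set t : ℂ := -(↑s) * (starRingEnd ℂ) k with ht_def
      have htk : (t * k).re = -(r * ‖k‖) := by
        rw [ht_def]
        rw [show -(↑s) * (starRingEnd ℂ) k * k = -(↑s) * ((starRingEnd ℂ) k * k) by ring]
        rw [mul_comm ((starRingEnd ℂ) k) k, Complex.mul_conj]
        rw [show (-(↑s : ℂ)) * (↑(Complex.normSq k) : ℂ) = ↑(-(s * Complex.normSq k)) by push_cast; ring]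
        rw [Complex.ofReal_re]
        rw [Complex.normSq_eq_norm_sq, hs_def]
        have : ‖k‖ ≠ 0 := by simpa using hk0
        field_simp
      have hnst : Complex.normSq t = r ^ 2 := by
        rw [ht_def]
        rw [show -(↑s : ℂ) * (starRingEnd ℂ) k = ((-s : ℝ) : ℂ) * (starRingEnd ℂ) k by push_cast; ring]
        rw [Complex.normSq_mul, Complex.normSq_ofReal, Complex.normSq_conj]
        rw [Complex.normSq_eq_norm_sq, hs_def]
        have : ‖k‖ ≠ 0 := by simpa using hk0
        field_simp
      -- the sector inequality for w t
      have him := im_le hX (u + t • d)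
      rw [hw t] at him
      have hwre : (z + t * b + (↑(Complex.normSq t) : ℂ) * c).re
          = z.re + (t * b).re + r ^ 2 * c.re := by
        rw [hnst]
        simp only [Complex.add_re, Complex.mul_re, Complex.ofReal_re, Complex.ofReal_im,
          zero_mul, sub_zero]
      have hwim : (z + t * b + (↑(Complex.normSq t) : ℂ) * c).im
          = z.im + (t * b).im + r ^ 2 * c.im := by
        rw [hnst]
        simp only [Complex.add_im, Complex.mul_im, Complex.ofReal_re, Complex.ofReal_im,
          zero_mul, add_zero]
      rw [hwre, hwim] at him
      have hmid : τ * (t * b).re - σ * (t * b).im = (t * k).re := by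
        rw [hk_def]
        rw [show t * (b * (↑τ + ↑σ * Complex.I)) = (t * b) * (↑τ + ↑σ * Complex.I) by ring]
        simp [Complex.mul_re, Complex.add_re, Complex.add_im, Complex.mul_im]
        ring
      have hσim : σ * (z.im + (t * b).im + r ^ 2 * c.im)
          ≤ τ * (z.re + (t * b).re + r ^ 2 * c.re) := by
        rw [← hτ_def] at him
        rcases abs_le.mp him with ⟨hl, hr'⟩
        rcases hσ with h | h <;> rw [h] <;> linarith
      have : τ * z.re - σ * z.im + ((t*k).re) + r ^ 2 * (τ * c.re - σ * c.im) ≥ 0 := by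
        rw [← hmid]; linarith [hσim]
      rw [htk, habsk] at this
      linarith [this]
  have hc1 := claim 1 (Or.inl rfl)
  have hc2 := claim (-1) (Or.inr rfl)
  have hv1 : (star v ⬝ᵥ X *ᵥ v).re = z.re + b.re + c.re := by
    rw [hvud, show u + d = u + (1:ℂ) • d by simp, hw 1]
    simp [Complex.add_re, Complex.mul_re]
  rw [← hz, hv1]
  have hbre : -(‖b‖) ≤ b.re := (abs_le.mp (Complex.abs_re_le_norm b)).1
  have hcs : Real.sin α ^ 2 + Real.cos α ^ 2 = 1 := Real.sin_sq_add_cos_sq α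
  exact final_arith hcos hcs hsincos hτ hzre hzim hcre hcim (norm_nonneg b) hbre
    (by linarith [hc1]) (by linarith [hc2])

lemma numericalRange_add {m : Type*} [Fintype m] {α : ℝ} {A B : Matrix m m ℂ}
    (hA : numericalRange A ⊆ sector α) (hB : numericalRange B ⊆ sector α) :
    numericalRange (A + B) ⊆ sector α := by
  rintro z ⟨x, hx, rfl⟩
  have hzA := hA ⟨x, hx, rfl⟩
  have hzB := hB ⟨x, hx, rfl⟩
  have hsplit : star x ⬝ᵥ (A + B).mulVec x
      = star x ⬝ᵥ A.mulVec x + star x ⬝ᵥ B.mulVec x := by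
    rw [Matrix.add_mulVec, dotProduct_add]
  rw [hsplit]
  obtain ⟨h1, h2⟩ := hzA
  obtain ⟨h3, h4⟩ := hzB
  constructor
  · simp only [Complex.add_re]; linarith
  · simp only [Complex.add_im, Complex.add_re]
    calc |(star x ⬝ᵥ A.mulVec x).im + (star x ⬝ᵥ B.mulVec x).im|
        ≤ |(star x ⬝ᵥ A.mulVec x).im| + |(star x ⬝ᵥ B.mulVec x).im| := abs_add_le _ _
      _ ≤ _ := by nlinarith [h2, h4]

lemma dot_matRe {m : Type*} [Fintype m] (Y : Matrix m m ℂ) (x : m → ℂ) :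
    star x ⬝ᵥ (matRe Y) *ᵥ x = (((star x ⬝ᵥ Y *ᵥ x).re : ℝ) : ℂ) := by
  have hconj : star x ⬝ᵥ Yᴴ *ᵥ x = star (star x ⬝ᵥ Y *ᵥ x) := by
    rw [star_dotProduct, Matrix.star_mulVec, Matrix.conjTranspose_conjTranspose,
      ← Matrix.dotProduct_mulVec]
  rw [matRe, Matrix.smul_mulVec, dotProduct_smul, Matrix.add_mulVec, dotProduct_add,
    hconj]
  rw [smul_eq_mul]
  rw [show star (star x ⬝ᵥ Y *ᵥ x) = (starRingEnd ℂ) (star x ⬝ᵥ Y *ᵥ x) from rfl]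
  rw [Complex.add_conj]
  push_cast
  ring

lemma matRe_isHermitian {m : Type*} [Fintype m] (Y : Matrix m m ℂ) :
    (matRe Y).IsHermitian := by
  rw [Matrix.IsHermitian, matRe, Matrix.conjTranspose_smul, Matrix.conjTranspose_add,
    Matrix.conjTranspose_conjTranspose]
  rw [show (star (1 / 2 : ℂ)) = (1 / 2 : ℂ) by norm_num [Complex.star_def, Complex.ext_iff]]
  rw [add_comm]

theorem sec_sq_re_schur_add {p q : ℕ} (α : ℝ) (hα : α ∈ Set.Ico 0 (Real.pi / 2))
    (A B : Matrix (Fin p ⊕ Fin q) (Fin p ⊕ Fin q) ℂ)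
    (hA : numericalRange A ⊆ sector α) (hB : numericalRange B ⊆ sector α) :
    (((((Real.cos α)⁻¹ ^ 2 : ℝ) : ℂ) • matRe (schur (A + B))) -
      (matRe (schur A) + matRe (schur B))).PosSemidef := by
  have hAB := numericalRange_add hA hB
  have hcos : 0 < Real.cos α := by
    have hpi := Real.pi_pos
    exact Real.cos_pos_of_mem_Ioo ⟨by linarith [hα.1], hα.2⟩
  rw [Matrix.posSemidef_iff_dotProduct_mulVec]
  constructor
  · -- Hermitian
    have h1 := matRe_isHermitian (schur (A + B))
    have h2 := matRe_isHermitian (schur A)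
    have h3 := matRe_isHermitian (schur B)
    apply Matrix.IsHermitian.sub _ (h2.add h3)
    rw [Matrix.IsHermitian, Matrix.conjTranspose_smul, h1]
    rw [show star ((((Real.cos α)⁻¹ ^ 2 : ℝ) : ℂ)) = (((Real.cos α)⁻¹ ^ 2 : ℝ) : ℂ) by
      rw [Complex.star_def, Complex.conj_ofReal]]
  · intro x
    have hexp : star x ⬝ᵥ (((((Real.cos α)⁻¹ ^ 2 : ℝ) : ℂ) • matRe (schur (A + B))) -
        (matRe (schur A) + matRe (schur B))) *ᵥ x
        = ((((Real.cos α)⁻¹ ^ 2 * (star x ⬝ᵥ (schur (A + B)) *ᵥ x).re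
            - ((star x ⬝ᵥ (schur A) *ᵥ x).re + (star x ⬝ᵥ (schur B) *ᵥ x).re) : ℝ)) : ℂ) := by
      rw [Matrix.sub_mulVec, dotProduct_sub, Matrix.add_mulVec, dotProduct_add,
        Matrix.smul_mulVec, dotProduct_smul, dot_matRe, dot_matRe, dot_matRe]
      have hgen : ∀ (C s1 s2 s3 : ℝ), ((C:ℝ):ℂ) • ((s3:ℝ):ℂ) - (((s1:ℝ):ℂ) + ((s2:ℝ):ℂ))
          = ((C * s3 - (s1 + s2) : ℝ) : ℂ) := by
        intros; push_cast [smul_eq_mul]; ring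
      exact hgen _ _ _ _
    rw [hexp]
    rw [Complex.zero_le_real]
    -- the real inequality
    have h11 := det11_unit hAB
    set u : Fin p ⊕ Fin q → ℂ :=
      Sum.elim (-(((A + B).toBlocks₁₁)⁻¹ * (A + B).toBlocks₁₂) *ᵥ x) x with hu_def
    have hu_inr : ∀ j, u (Sum.inr j) = x j := fun j => rfl
    have hkA := key hα hA x u hu_inr
    have hkB := key hα hB x u hu_inr
    have hsum : star u ⬝ᵥ (A + B) *ᵥ u = star x ⬝ᵥ (schur (A + B)) *ᵥ x := dot_schur h11 x
    have hsplit : star u ⬝ᵥ (A + B) *ᵥ u = star u ⬝ᵥ A *ᵥ u + star u ⬝ᵥ B *ᵥ u := by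
      rw [Matrix.add_mulVec, dotProduct_add]
    have hre : (star x ⬝ᵥ (schur (A + B)) *ᵥ x).re
        = (star u ⬝ᵥ A *ᵥ u).re + (star u ⬝ᵥ B *ᵥ u).re := by
      rw [← hsum, hsplit, Complex.add_re]
    have hchain : Real.cos α ^ 2 * ((star x ⬝ᵥ (schur A) *ᵥ x).re
        + (star x ⬝ᵥ (schur B) *ᵥ x).re) ≤ (star x ⬝ᵥ (schur (A + B)) *ᵥ x).re := by
      rw [hre]; linarith [hkA, hkB]
    have hc2 : (0:ℝ) < Real.cos α ^ 2 := by positivity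
    rw [sub_nonneg]
    calc (star x ⬝ᵥ (schur A) *ᵥ x).re + (star x ⬝ᵥ (schur B) *ᵥ x).re
        = (Real.cos α)⁻¹ ^ 2 * (Real.cos α ^ 2 * ((star x ⬝ᵥ (schur A) *ᵥ x).re
            + (star x ⬝ᵥ (schur B) *ᵥ x).re)) := by
          field_simp
      _ ≤ (Real.cos α)⁻¹ ^ 2 * (star x ⬝ᵥ (schur (A + B)) *ᵥ x).re := by
          apply mul_le_mul_of_nonneg_left hchain (by positivity)
end
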